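/- For all integers m ≥ 0 and n ≥ 1, and for all s ∈ ℝ and t > 0, L̂_d applied to the function (s,t) ↦ t^m (d(t)−s)^n ψ̂₀(s,t) equals (m t^{m−1}(d(t)−s)^n − ε n(n−1) t^m (d(t)−s)^{n−2}) ψ̂₀(s,t) + 2√(ε/(πt)) n t^m (d(t)−s)^{n−1} Ê(s,t). -/

import Mathlib

/-- The complementary error function `erfc z = (2/√π) ∫_z^∞ e^{-u²} du`. -/
noncomputable def erfc (z : ℝ) : ℝ :=
  (2 / Real.sqrt Real.pi) * ∫ u in Set.Ioi z, Real.exp (-u ^ 2)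

/-- `ψ̂₀(s,t) = erfc((d(t)-s)/(2√(εt)))`. -/
noncomputable def psi0 (ε : ℝ) (d : ℝ → ℝ) (s t : ℝ) : ℝ :=
  erfc ((d t - s) / (2 * Real.sqrt (ε * t)))

/-- `Ê(s,t) = exp(-(s-d(t))²/(4εt))`. -/
noncomputable def Ehat (ε : ℝ) (d : ℝ → ℝ) (s t : ℝ) : ℝ :=
  Real.exp (-(s - d t) ^ 2 / (4 * ε * t))

/-- The operator `L̂_d F = -ε F_ss + â(d(t),t) F_s + F_t`. -/
noncomputable def Ld (ε : ℝ) (a : ℝ → ℝ → ℝ) (d : ℝ → ℝ) (F : ℝ → ℝ → ℝ) (s t : ℝ) : ℝ :=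
  -ε * iteratedDeriv 2 (fun x => F x t) s
    + a (d t) t * deriv (fun x => F x t) s
    + deriv (fun τ => F s τ) t

open MeasureTheory in
lemma my_integrable : Integrable (fun u : ℝ => Real.exp (-u ^ 2)) := by
  simpa using integrable_exp_neg_mul_sq (b := (1:ℝ)) one_pos

open MeasureTheory in
lemma hasDerivAt_erfc (z : ℝ) :
    HasDerivAt erfc (-(2 / Real.sqrt Real.pi) * Real.exp (-z ^ 2)) z := by
  have hcont : Continuous fun u : ℝ => Real.exp (-u ^ 2) := by continuity
  have hint : ∀ x : ℝ, (∫ u in Set.Ioi x, Real.exp (-u ^ 2))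
      = (∫ u : ℝ, Real.exp (-u ^ 2)) -
        ((∫ u in Set.Iic (0:ℝ), Real.exp (-u ^ 2)) + ∫ u in (0:ℝ)..x, Real.exp (-u ^ 2)) := by
    intro x
    have h1 := intervalIntegral.integral_Iic_add_Ioi (b := x)
      (f := fun u : ℝ => Real.exp (-u ^ 2)) (μ := volume)
      my_integrable.integrableOn my_integrable.integrableOn
    have h2 := intervalIntegral.integral_Iic_sub_Iic (a := (0:ℝ)) (b := x)
      (f := fun u : ℝ => Real.exp (-u ^ 2)) (μ := volume)
      my_integrable.integrableOn my_integrable.integrableOn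
    linarith
  have hFTC : HasDerivAt (fun x : ℝ => ∫ u in (0:ℝ)..x, Real.exp (-u ^ 2))
      (Real.exp (-z ^ 2)) z :=
    intervalIntegral.integral_hasDerivAt_right my_integrable.intervalIntegrable
      (hcont.stronglyMeasurableAtFilter _ _) hcont.continuousAt
  have hder : HasDerivAt (fun x : ℝ => ∫ u in Set.Ioi x, Real.exp (-u ^ 2))
      (-Real.exp (-z ^ 2)) z := by
    have heq : (fun x : ℝ => ∫ u in Set.Ioi x, Real.exp (-u ^ 2))
        = fun x : ℝ => (∫ u : ℝ, Real.exp (-u ^ 2)) -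
          ((∫ u in Set.Iic (0:ℝ), Real.exp (-u ^ 2)) + ∫ u in (0:ℝ)..x, Real.exp (-u ^ 2)) :=
      funext hint
    rw [heq]
    simpa using (hFTC.const_add (∫ u in Set.Iic (0:ℝ), Real.exp (-u ^ 2))).const_sub
      (∫ u : ℝ, Real.exp (-u ^ 2))
  have := hder.const_mul (2 / Real.sqrt Real.pi)
  refine this.congr_deriv ?_
  ring

/-- for all integers `m ≥ 0` and `n ≥ 1`, `Ld` applied to
`(s,t) ↦ t^m (d t - s)^n psi0 s t` equals
`(m t^(m-1) (d t - s)^n - ε n (n-1) t^m (d t - s)^(n-2)) psi0 s t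
  + 2 sqrt(ε/(πt)) n t^m (d t - s)^(n-1) Ehat s t`
(where for `m = 0` the first term vanishes and for `n = 1` the term with
coefficient `n(n-1)` vanishes). -/
theorem stmt_7
    (ε d₀ : ℝ) (hε : 0 < ε) (hd₀ : d₀ ∈ Set.Ioo (0 : ℝ) 1)
    (a : ℝ → ℝ → ℝ) (haC1 : ContDiff ℝ 1 (fun p : ℝ × ℝ => a p.1 p.2))
    (hapos : ∀ s t : ℝ, 0 ≤ t → 0 < a s t)
    (d : ℝ → ℝ) (hdC1 : ContDiff ℝ 1 d)
    (hdODE : ∀ t : ℝ, 0 ≤ t → HasDerivAt d (a (d t) t) t)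
    (hd0 : d 0 = d₀) :
    ∀ m n : ℕ, 1 ≤ n → ∀ s t : ℝ, 0 < t →
      Ld ε a d (fun s' t' => t' ^ m * (d t' - s') ^ n * psi0 ε d s' t') s t
        = ((m : ℝ) * t ^ (m - 1) * (d t - s) ^ n
            - ε * (n : ℝ) * ((n : ℝ) - 1) * t ^ m * (d t - s) ^ (n - 2)) * psi0 ε d s t
          + 2 * Real.sqrt (ε / (Real.pi * t)) * (n : ℝ) * t ^ m * (d t - s) ^ (n - 1)
            * Ehat ε d s t := by
  intro m n hn s t ht
  have hεt : 0 < ε * t := mul_pos hε ht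
  have hq0 : 0 < Real.sqrt (ε * t) := Real.sqrt_pos.2 hεt
  have hr0 : 0 < Real.sqrt Real.pi := Real.sqrt_pos.2 Real.pi_pos
  -- exp of -z² equals Ehat
  have hEeq : ∀ x : ℝ, Real.exp (-((d t - x) / (2 * Real.sqrt (ε * t))) ^ 2) = Ehat ε d x t := by
    intro x
    unfold Ehat
    congr 1
    rw [div_pow, mul_pow, Real.sq_sqrt hεt.le]
    ring
  -- s-derivative of psi0
  have hψs : ∀ x : ℝ, HasDerivAt (fun y => psi0 ε d y t)
      (Ehat ε d x t / (Real.sqrt Real.pi * Real.sqrt (ε * t))) x := by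
    intro x
    have hinner : HasDerivAt (fun y : ℝ => (d t - y) / (2 * Real.sqrt (ε * t)))
        (-1 / (2 * Real.sqrt (ε * t))) x := by
      have h1 : HasDerivAt (fun y : ℝ => d t - y) (-1) x := by
        simpa using (hasDerivAt_id x).const_sub (d t)
      exact h1.div_const _
    have h2 := (hasDerivAt_erfc ((d t - x) / (2 * Real.sqrt (ε * t)))).comp x hinner
    have hval : -(2 / Real.sqrt Real.pi) *
          Real.exp (-((d t - x) / (2 * Real.sqrt (ε * t))) ^ 2) * (-1 / (2 * Real.sqrt (ε * t)))
        = Ehat ε d x t / (Real.sqrt Real.pi * Real.sqrt (ε * t)) := by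
      rw [hEeq x]; field_simp
    rw [hval] at h2
    exact h2
  -- s-derivative of Ehat
  have hEs : ∀ x : ℝ, HasDerivAt (fun y => Ehat ε d y t)
      (Ehat ε d x t * ((d t - x) / (2 * ε * t))) x := by
    intro x
    have hu : HasDerivAt (fun y : ℝ => -(y - d t) ^ 2 / (4 * ε * t))
        ((d t - x) / (2 * ε * t)) x := by
      have h1 : HasDerivAt (fun y : ℝ => (y - d t) ^ 2) (2 * (x - d t)) x := by
        simpa using ((hasDerivAt_id x).sub_const (d t)).fun_pow 2
      have h2 := (h1.neg).div_const (4 * ε * t)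
      refine h2.congr_deriv ?_
      field_simp
      ring
    have h3 := (Real.hasDerivAt_exp (-(x - d t) ^ 2 / (4 * ε * t))).comp x hu
    exact h3
  -- derivative of (d t - ·)^j
  have hgpow : ∀ (x : ℝ) (j : ℕ), HasDerivAt (fun y : ℝ => (d t - y) ^ j)
      (-(j : ℝ) * (d t - x) ^ (j - 1)) x := by
    intro x j
    have h1 : HasDerivAt (fun y : ℝ => d t - y) (-1) x := by
      simpa using (hasDerivAt_id x).const_sub (d t)
    have h2 := h1.pow j
    refine h2.congr_deriv ?_
    ring
  -- first s-derivative of F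
  have hFs : ∀ x : ℝ, HasDerivAt (fun y => t ^ m * (d t - y) ^ n * psi0 ε d y t)
      ((0 * (d t - x) ^ n + t ^ m * (-(n : ℝ) * (d t - x) ^ (n - 1))) * psi0 ε d x t
        + t ^ m * (d t - x) ^ n *
          (Ehat ε d x t / (Real.sqrt Real.pi * Real.sqrt (ε * t)))) x := by
    intro x
    exact (((hasDerivAt_const x ((t:ℝ) ^ m)).mul (hgpow x n)).mul (hψs x))
  have hd1 : (deriv fun x => t ^ m * (d t - x) ^ n * psi0 ε d x t)
      = fun x => (0 * (d t - x) ^ n + t ^ m * (-(n : ℝ) * (d t - x) ^ (n - 1))) * psi0 ε d x t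
        + t ^ m * (d t - x) ^ n *
          (Ehat ε d x t / (Real.sqrt Real.pi * Real.sqrt (ε * t))) :=
    funext fun x => (hFs x).deriv
  -- second s-derivative
  have hFss : HasDerivAt
      (fun x => (0 * (d t - x) ^ n + t ^ m * (-(n : ℝ) * (d t - x) ^ (n - 1))) * psi0 ε d x t
        + t ^ m * (d t - x) ^ n *
          (Ehat ε d x t / (Real.sqrt Real.pi * Real.sqrt (ε * t))))
      ((0 * (-(n : ℝ) * (d t - s) ^ (n - 1))
          + t ^ m * (-(n : ℝ) * (-(((n : ℕ) - 1 : ℕ) : ℝ) * (d t - s) ^ (n - 1 - 1)))) * psi0 ε d s t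
        + (0 * (d t - s) ^ n + t ^ m * (-(n : ℝ) * (d t - s) ^ (n - 1))) *
            (Ehat ε d s t / (Real.sqrt Real.pi * Real.sqrt (ε * t)))
        + ((t ^ m * (-(n : ℝ) * (d t - s) ^ (n - 1))) *
            (Ehat ε d s t / (Real.sqrt Real.pi * Real.sqrt (ε * t)))
          + t ^ m * (d t - s) ^ n *
            (Ehat ε d s t * ((d t - s) / (2 * ε * t)) / (Real.sqrt Real.pi * Real.sqrt (ε * t)))))
      s := by
    have hA1 := ((hgpow s n).const_mul (0:ℝ)).add
      (((hgpow s (n-1)).const_mul (-(n:ℝ))).const_mul ((t:ℝ) ^ m))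
    have hB1 := (hgpow s n).const_mul ((t:ℝ) ^ m)
    have hC1 := (hEs s).div_const (Real.sqrt Real.pi * Real.sqrt (ε * t))
    exact (hA1.mul (hψs s)).add (hB1.mul hC1)
  -- t-derivative pieces
  have hsq : HasDerivAt (fun τ : ℝ => Real.sqrt (ε * τ)) (ε / (2 * Real.sqrt (ε * t))) t := by
    have h1 : HasDerivAt (fun τ : ℝ => ε * τ) ε t := by
      simpa using (hasDerivAt_id t).const_mul ε
    have h2 := (Real.hasDerivAt_sqrt (ne_of_gt hεt)).comp t h1
    refine h2.congr_deriv ?_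
    field_simp
  have hz : HasDerivAt (fun τ : ℝ => (d τ - s) / (2 * Real.sqrt (ε * τ)))
      ((a (d t) t * (2 * Real.sqrt (ε * t)) - (d t - s) * (2 * (ε / (2 * Real.sqrt (ε * t)))))
        / (2 * Real.sqrt (ε * t)) ^ 2) t := by
    have hN : HasDerivAt (fun τ : ℝ => d τ - s) (a (d t) t) t := (hdODE t ht.le).sub_const s
    have hD : HasDerivAt (fun τ : ℝ => 2 * Real.sqrt (ε * τ))
        (2 * (ε / (2 * Real.sqrt (ε * t)))) t := hsq.const_mul 2
    exact hN.div hD (by positivity)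
  have hψt : HasDerivAt (fun τ => psi0 ε d s τ)
      (-(2 / Real.sqrt Real.pi) * Ehat ε d s t *
        ((a (d t) t * (2 * Real.sqrt (ε * t)) - (d t - s) * (2 * (ε / (2 * Real.sqrt (ε * t)))))
          / (2 * Real.sqrt (ε * t)) ^ 2)) t := by
    rw [← hEeq s]
    exact (hasDerivAt_erfc ((d t - s) / (2 * Real.sqrt (ε * t)))).comp t hz
  have hgn_t : HasDerivAt (fun τ : ℝ => (d τ - s) ^ n)
      ((n : ℝ) * (d t - s) ^ (n - 1) * a (d t) t) t :=
    ((hdODE t ht.le).sub_const s).pow n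
  have htm : HasDerivAt (fun τ : ℝ => τ ^ m) ((m : ℝ) * t ^ (m - 1)) t := hasDerivAt_pow m t
  have hFt : HasDerivAt (fun τ => τ ^ m * (d τ - s) ^ n * psi0 ε d s τ)
      (((m : ℝ) * t ^ (m - 1) * (d t - s) ^ n
          + t ^ m * ((n : ℝ) * (d t - s) ^ (n - 1) * a (d t) t)) * psi0 ε d s t
        + t ^ m * (d t - s) ^ n *
          (-(2 / Real.sqrt Real.pi) * Ehat ε d s t *
            ((a (d t) t * (2 * Real.sqrt (ε * t))
              - (d t - s) * (2 * (ε / (2 * Real.sqrt (ε * t)))))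
              / (2 * Real.sqrt (ε * t)) ^ 2))) t :=
    (htm.mul hgn_t).mul hψt
  -- rewrite the goal
  have hitd : iteratedDeriv 2 (fun x => t ^ m * (d t - x) ^ n * psi0 ε d x t) s
      = ((0 * (-(n : ℝ) * (d t - s) ^ (n - 1))
          + t ^ m * (-(n : ℝ) * (-(((n : ℕ) - 1 : ℕ) : ℝ) * (d t - s) ^ (n - 1 - 1)))) * psi0 ε d s t
        + (0 * (d t - s) ^ n + t ^ m * (-(n : ℝ) * (d t - s) ^ (n - 1))) *
            (Ehat ε d s t / (Real.sqrt Real.pi * Real.sqrt (ε * t)))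
        + ((t ^ m * (-(n : ℝ) * (d t - s) ^ (n - 1))) *
            (Ehat ε d s t / (Real.sqrt Real.pi * Real.sqrt (ε * t)))
          + t ^ m * (d t - s) ^ n *
            (Ehat ε d s t * ((d t - s) / (2 * ε * t)) / (Real.sqrt Real.pi * Real.sqrt (ε * t))))) := by
    rw [show (2:ℕ) = 1 + 1 from rfl, iteratedDeriv_succ, iteratedDeriv_one, hd1]
    exact hFss.deriv
  simp only [Ld]
  rw [hitd, (hFs s).deriv, hFt.deriv]
  -- replace sqrt(ε/(π t))
  have h2s : Real.sqrt (ε / (Real.pi * t))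
      = ε / (Real.sqrt Real.pi * Real.sqrt (ε * t)) := by
    rw [show Real.sqrt Real.pi * Real.sqrt (ε * t) = Real.sqrt (Real.pi * (ε * t)) from
        (Real.sqrt_mul Real.pi_pos.le _).symm,
      eq_div_iff (by positivity), ← Real.sqrt_mul (by positivity),
      show ε / (Real.pi * t) * (Real.pi * (ε * t)) = ε ^ 2 from by field_simp,
      Real.sqrt_sq hε.le]
  rw [h2s]
  have hn2 : n - 1 - 1 = n - 2 := by omega
  rw [hn2]
  -- final algebra
  have hq2 : Real.sqrt (ε * t) ^ 2 = ε * t := Real.sq_sqrt hεt.le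
  set P := psi0 ε d s t
  set E := Ehat ε d s t
  set A := a (d t) t
  set q := Real.sqrt (ε * t) with hqdef
  set r := Real.sqrt Real.pi with hrdef
  set g := d t - s with hgdef
  have htq : t = q ^ 2 / ε := by rw [hq2]; field_simp
  have hq' : q ≠ 0 := ne_of_gt hq0
  have hr' : r ≠ 0 := ne_of_gt hr0
  have hε' : (ε : ℝ) ≠ 0 := ne_of_gt hε
  have ht' : t ≠ 0 := ne_of_gt ht
  -- generalize the powers
  generalize t ^ m = T at *
  generalize t ^ (m - 1) = T' at *
  generalize g ^ n = G1 at *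
  generalize g ^ (n - 1) = G2 at *
  generalize g ^ (n - 2) = G3 at *
  rw [htq]
  field_simp
  rw [Nat.cast_sub hn, Nat.cast_one]
  ring
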